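/- Every dill map F with diameter s and local rule f is (2s−1)·(‖f‖_max/‖f‖_min)-Lipschitz with respect to the Feldman pseudometric: for all x, y ∈ A^ℕ, 𝔡_L(F(x), F(y)) ≤ (2s−1)·(‖f‖_max/‖f‖_min)·𝔡_L(x,y). In particular, every substitution τ satisfies 𝔡_L(τ̄(x), τ̄(y)) ≤ (‖τ‖_max/‖τ‖_min)·𝔡_L(x,y) for all x, y ∈ A^ℕ. -/

import Mathlib

open Filter

/-- The finite factor `x_[i, i+n)` of the infinite word `x`. -/
def factor {A : Type*} (x : ℕ → A) (i n : ℕ) : List A := List.ofFn (fun k : Fin n => x (i + k))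

/-- The shift map `σ` on infinite words. -/
def shift {A : Type*} (x : ℕ → A) : ℕ → A := fun i => x (i + 1)
/-- The maximal length of a common (not necessarily contiguous) subsequence of `u` and `v`. -/
noncomputable def lcs {A : Type*} (u v : List A) : ℕ :=
  sSup {n | ∃ w : List A, w.length = n ∧ w.Sublist u ∧ w.Sublist v}

/-- The (halved) Levenshtein distance `d_L(u,v) = (|u|+|v|)/2 - ℓ(u,v)`. -/
noncomputable def levD {A : Type*} (u v : List A) : ℝ :=
  ((u.length : ℝ) + v.length) / 2 - lcs u v

/-- The Feldman pseudometric `𝔡_L`. -/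
noncomputable def feld {A : Type*} (x y : ℕ → A) : ℝ :=
  limsup (fun l : ℕ => levD (factor x 0 l) (factor y 0 l) / l) atTop
/-- The window `x_[i, i+s)` of the infinite word `x`, as an element of `A^s`. -/
def window {A : Type*} (x : ℕ → A) (i : ℕ) (s : ℕ) : Fin s → A := fun k => x (i + k)

/-- The cocycle `S_n(x) = ∑_{j<n} |f(x_[j,j+s))|` of a local rule `f`. -/
def cocycle {A : Type*} {s : ℕ} (f : (Fin s → A) → List A) (x : ℕ → A) (n : ℕ) : ℕ :=
  ∑ j ∈ Finset.range n, (f (window x j s)).length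

/-- `F` is the dill map with local rule `f`: for every `x`, `F x` is the infinite
concatenation `f(x_[0,s)) f(x_[1,1+s)) f(x_[2,2+s)) ⋯`. -/
def IsDillVia {A : Type*} {s : ℕ} (f : (Fin s → A) → List A) (F : (ℕ → A) → ℕ → A) : Prop :=
  ∀ (x : ℕ → A) (n k : ℕ) (h : k < (f (window x n s)).length),
    F x (cocycle f x n + k) = (f (window x n s)).get ⟨k, h⟩

/-- The lower norm `‖f‖_min = min_{u ∈ A^s} |f(u)|` of a local rule. -/
noncomputable def normMin {A : Type*} {s : ℕ} (f : (Fin s → A) → List A) : ℕ :=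
  sInf {n | ∃ u : Fin s → A, (f u).length = n}

/-- The upper norm `‖f‖_max = max_{u ∈ A^s} |f(u)|` of a local rule. -/
noncomputable def normMax {A : Type*} {s : ℕ} (f : (Fin s → A) → List A) : ℕ :=
  sSup {n | ∃ u : Fin s → A, (f u).length = n}

/-- The substitution cocycle `∑_{j<n} |τ(z_j)|`. -/
def subCocycle {A : Type*} (τ : A → List A) (z : ℕ → A) (n : ℕ) : ℕ :=
  ∑ j ∈ Finset.range n, (τ (z j)).length

set_option linter.unusedVariables false
set_option linter.unusedSectionVars false
open List Topology

section basic
variable {A : Type*}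

@[simp] lemma factor_length (x : ℕ → A) (i n : ℕ) : (factor x i n).length = n := by
  simp [factor]

lemma factor_getElem (x : ℕ → A) (i n k : ℕ) (h : k < (factor x i n).length) :
    (factor x i n)[k] = x (i + k) := by
  simp [factor] at h ⊢

lemma factor_append (x : ℕ → A) (i a b : ℕ) :
    factor x i (a + b) = factor x i a ++ factor x (i + a) b := by
  apply List.ext_getElem
  · simp
  · intro k h1 h2
    rcases lt_or_ge k a with hk | hk
    · rw [List.getElem_append_left (by simpa using hk)]
      rw [factor_getElem, factor_getElem]
    · rw [List.getElem_append_right (by simpa using hk)]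
      rw [factor_getElem, factor_getElem]
      congr 1
      simp only [factor_length] at h1 hk ⊢
      omega

lemma factor_prefix_sublist (x : ℕ → A) {c L : ℕ} (h : c ≤ L) :
    factor x 0 c <+ factor x 0 L := by
  have : L = c + (L - c) := by omega
  rw [this, factor_append]
  exact List.sublist_append_left _ _

lemma lcs_set_nonempty (u v : List A) :
    {n | ∃ w : List A, w.length = n ∧ w.Sublist u ∧ w.Sublist v}.Nonempty :=
  ⟨0, [], rfl, List.nil_sublist u, List.nil_sublist v⟩

lemma lcs_set_bdd (u v : List A) :
    BddAbove {n | ∃ w : List A, w.length = n ∧ w.Sublist u ∧ w.Sublist v} :=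
  ⟨u.length, fun n ⟨w, hw, h1, _⟩ => hw ▸ h1.length_le⟩

lemma le_lcs {u v w : List A} (h1 : w <+ u) (h2 : w <+ v) : w.length ≤ lcs u v :=
  le_csSup (lcs_set_bdd u v) ⟨w, rfl, h1, h2⟩

lemma lcs_le_left (u v : List A) : lcs u v ≤ u.length :=
  csSup_le (lcs_set_nonempty u v) (fun n ⟨w, hw, h1, _⟩ => hw ▸ h1.length_le)

lemma exists_lcs (u v : List A) : ∃ w : List A, w.length = lcs u v ∧ w <+ u ∧ w <+ v :=
  Nat.sSup_mem (lcs_set_nonempty u v) (lcs_set_bdd u v)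

lemma lcs_comm (u v : List A) : lcs u v = lcs v u := by
  unfold lcs
  congr 1
  ext n
  exact ⟨fun ⟨w, h, h1, h2⟩ => ⟨w, h, h2, h1⟩, fun ⟨w, h, h1, h2⟩ => ⟨w, h, h2, h1⟩⟩

end basic

section dill
variable {A : Type*} {s : ℕ}

variable [Fintype A] (f : (Fin s → A) → List A)

lemma norm_bdd : BddAbove {n | ∃ u : Fin s → A, (f u).length = n} := by
  have : {n | ∃ u : Fin s → A, (f u).length = n} = Set.range (fun u => (f u).length) := rfl
  rw [this]
  exact (Set.finite_range _).bddAbove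

lemma len_le_normMax (u : Fin s → A) : (f u).length ≤ normMax f :=
  le_csSup (norm_bdd f) ⟨u, rfl⟩

lemma normMin_le_len (u : Fin s → A) : normMin f ≤ (f u).length :=
  Nat.sInf_le ⟨u, rfl⟩

lemma one_le_normMin [Nonempty A] (hf : ∀ u, f u ≠ []) : 1 ≤ normMin f := by
  have hne : {n | ∃ u : Fin s → A, (f u).length = n}.Nonempty :=
    ⟨(f Classical.ofNonempty).length, Classical.ofNonempty, rfl⟩
  obtain ⟨u, hu⟩ := Nat.sInf_mem hne
  rw [normMin, ← hu]
  exact List.length_pos_iff.2 (hf u)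

lemma normMin_le_normMax [Nonempty A] : normMin f ≤ normMax f :=
  (normMin_le_len f Classical.ofNonempty).trans (len_le_normMax f Classical.ofNonempty)

lemma cocycle_succ (x : ℕ → A) (n : ℕ) :
    cocycle f x (n + 1) = cocycle f x n + (f (window x n s)).length :=
  Finset.sum_range_succ _ _

lemma cocycle_mono (x : ℕ → A) : Monotone (cocycle f x) := by
  intro i j hij
  exact Finset.sum_le_sum_of_subset (Finset.range_subset_range.2 hij)

lemma min_mul_le_cocycle (x : ℕ → A) (n : ℕ) : normMin f * n ≤ cocycle f x n := by
  calc normMin f * n = ∑ _j ∈ Finset.range n, normMin f := by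
        simp [mul_comm]
    _ ≤ cocycle f x n := Finset.sum_le_sum (fun j _ => normMin_le_len f _)

lemma cocycle_le_max_mul (x : ℕ → A) (n : ℕ) : cocycle f x n ≤ normMax f * n := by
  calc cocycle f x n ≤ ∑ _j ∈ Finset.range n, normMax f :=
        Finset.sum_le_sum (fun j _ => len_le_normMax f _)
    _ = normMax f * n := by simp [mul_comm]

lemma factor_cocycle {F : (ℕ → A) → ℕ → A} (hF : IsDillVia f F) (x : ℕ → A) (n : ℕ) :
    factor (F x) 0 (cocycle f x n)
      = ((List.range n).map (fun j => f (window x j s))).flatten := by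
  induction n with
  | zero => simp [cocycle, factor]
  | succ n ih =>
    rw [cocycle_succ, factor_append, ih, List.range_succ, List.map_append, List.flatten_append]
    congr 1
    simp only [List.map_cons, List.map_nil, List.flatten_cons, List.flatten_nil, List.append_nil]
    apply List.ext_getElem
    · simp
    · intro k h1 h2
      rw [factor_getElem]
      have h2' : k < (f (window x n s)).length := h2
      have := hF x n k h2'
      simpa [zero_add] using this

end dill

section listhelp
variable {α : Type*}

lemma List.Sublist.flatten_mono {l₁ l₂ : List (List α)} (h : l₁ <+ l₂) :
    l₁.flatten <+ l₂.flatten := by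
  induction h with
  | slnil => exact List.Sublist.refl _
  | cons a _ ih =>
    exact ih.trans (by simpa [List.flatten_cons] using List.sublist_append_right a.flatten _)
  | cons_cons a _ ih => simpa [List.flatten_cons] using ih.append_left a

lemma sorted_sublist_range' {S : List ℕ} (hS : S.Pairwise (· < ·)) :
    ∀ k n : ℕ, (∀ j ∈ S, k ≤ j ∧ j < k + n) → S <+ List.range' k n := by
  induction S with
  | nil => exact fun k n _ => List.nil_sublist _
  | cons a T ih =>
    intro k n hmem
    have hT : T.Pairwise (· < ·) := hS.of_cons
    have haT : ∀ j ∈ T, a < j := fun j hj => List.rel_of_pairwise_cons hS hj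
    obtain ⟨hka, han⟩ := hmem a List.mem_cons_self
    have h1 : List.range' k n = List.range' k (a - k) ++ List.range' a (n - (a - k)) := by
      have := List.range'_append_1 (s := k) (m := a - k) (n := n - (a - k))
      rw [show k + (a - k) = a by omega, show a - k + (n - (a - k)) = n by omega] at this
      exact this.symm
    have h2 : List.range' a (n - (a - k)) = a :: List.range' (a + 1) (n - (a - k) - 1) := by
      obtain ⟨c, hc⟩ : ∃ c, n - (a - k) = c + 1 := ⟨n - (a - k) - 1, by omega⟩
      rw [hc, List.range'_succ]
      simp
    have hTsub : T <+ List.range' (a + 1) (n - (a - k) - 1) := by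
      apply ih hT
      intro j hj
      obtain ⟨_, hjn⟩ := hmem j (List.mem_cons_of_mem a hj)
      exact ⟨haT j hj, by omega⟩
    rw [h1, h2]
    exact (hTsub.cons₂ a).trans (List.sublist_append_right _ _)

lemma sorted_sublist_range {S : List ℕ} (hS : S.Pairwise (· < ·)) {n : ℕ}
    (hn : ∀ j ∈ S, j < n) : S <+ List.range n := by
  rw [List.range_eq_range']
  exact sorted_sublist_range' hS 0 n (fun j hj => ⟨Nat.zero_le j, by simpa using hn j hj⟩)

end listhelp

section counting

lemma steps_count {a : ℕ → ℕ} (hmono : StrictMono a) {ℓ m : ℕ} (hℓm : ℓ ≤ m)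
    (hm : ∀ i < ℓ, a i < m) :
    ((Finset.range (ℓ - 1)).filter (fun t => a t + 1 < a (t + 1))).card ≤ m - ℓ := by
  rcases Nat.eq_zero_or_pos ℓ with h0 | hpos
  · subst h0; simp
  have key : ∀ t, (a t : ℤ) + 1 ≤ a (t + 1) := fun t => by
    exact_mod_cast hmono (Nat.lt_succ_self t)
  have h1 : ((Finset.range (ℓ - 1)).filter (fun t => a t + 1 < a (t + 1))).card • (1 : ℤ)
      ≤ ∑ t ∈ (Finset.range (ℓ - 1)).filter (fun t => a t + 1 < a (t + 1)),
          ((a (t + 1) : ℤ) - a t - 1) := by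
    apply Finset.card_nsmul_le_sum
    intro t ht
    have := (Finset.mem_filter.1 ht).2
    omega
  have h2 : ∑ t ∈ (Finset.range (ℓ - 1)).filter (fun t => a t + 1 < a (t + 1)),
        ((a (t + 1) : ℤ) - a t - 1)
      ≤ ∑ t ∈ Finset.range (ℓ - 1), ((a (t + 1) : ℤ) - a t - 1) := by
    apply Finset.sum_le_sum_of_subset_of_nonneg (Finset.filter_subset _ _)
    intro t _ _
    have := key t
    omega
  have h3 : ∑ t ∈ Finset.range (ℓ - 1), ((a (t + 1) : ℤ) - a t - 1)
      = (a (ℓ - 1) : ℤ) - a 0 - (ℓ - 1) := by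
    rw [Finset.sum_sub_distrib, Finset.sum_range_sub (fun i => (a i : ℤ))]
    simp only [Finset.sum_const, Finset.card_range, nsmul_eq_mul, mul_one]
    omega
  have h4 : (a (ℓ - 1) : ℤ) < m := by exact_mod_cast hm (ℓ - 1) (by omega)
  have h5 : (0 : ℤ) ≤ a 0 := Int.natCast_nonneg _
  rw [h3] at h2
  have := h1.trans h2
  simp only [nsmul_eq_mul, mul_one] at this
  omega

end counting

section key
variable {A : Type*} [Fintype A] [Nonempty A] {s : ℕ}

lemma key_lemma (hs : 1 ≤ s) (f : (Fin s → A) → List A)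
    (F : (ℕ → A) → ℕ → A) (hF : IsDillVia f F) (x y : ℕ → A) {lx ly L : ℕ}
    (hxL : cocycle f x lx ≤ L) (hyL : cocycle f y ly ≤ L)
    (hLx : L ≤ cocycle f x (lx + 1)) (hLy : L ≤ cocycle f y (ly + 1)) :
    L ≤ lcs (factor (F x) 0 L) (factor (F y) 0 L)
        + normMax f * (s + (2 * s - 1) *
            (min lx ly - lcs (factor x 0 (min lx ly)) (factor y 0 (min lx ly)))) := by
  classical
  set m := min lx ly with hm
  set ℓ := lcs (factor x 0 m) (factor y 0 m) with hℓdef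
  obtain ⟨w, hwlen, hwx, hwy⟩ := exists_lcs (factor x 0 m) (factor y 0 m)
  have hℓm : ℓ ≤ m := by simpa using lcs_le_left (factor x 0 m) (factor y 0 m)
  obtain ⟨a, ha⟩ := List.sublist_iff_exists_orderEmbedding_getElem?_eq.1 hwx
  obtain ⟨b, hb⟩ := List.sublist_iff_exists_orderEmbedding_getElem?_eq.1 hwy
  have hax : ∀ i, i < ℓ → a i < m ∧ ∃ hi : i < w.length, x (a i) = w.get ⟨i, hi⟩ := by
    intro i hi
    have hi' : i < w.length := by omega
    have h1 := ha i
    rw [List.getElem?_eq_getElem hi'] at h1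
    have h2 := h1.symm
    rw [List.getElem?_eq_some_iff] at h2
    obtain ⟨hlt, hv⟩ := h2
    rw [factor_length] at hlt
    refine ⟨hlt, hi', ?_⟩
    rw [List.get_eq_getElem, ← hv]
    have := factor_getElem x 0 m (a i) (by simpa using hlt)
    simpa [List.get_eq_getElem] using this.symm
  have hby : ∀ i, i < ℓ → b i < m ∧ ∃ hi : i < w.length, y (b i) = w.get ⟨i, hi⟩ := by
    intro i hi
    have hi' : i < w.length := by omega
    have h1 := hb i
    rw [List.getElem?_eq_getElem hi'] at h1
    have h2 := h1.symm
    rw [List.getElem?_eq_some_iff] at h2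
    obtain ⟨hlt, hv⟩ := h2
    rw [factor_length] at hlt
    refine ⟨hlt, hi', ?_⟩
    rw [List.get_eq_getElem, ← hv]
    have := factor_getElem y 0 m (b i) (by simpa using hlt)
    simpa [List.get_eq_getElem] using this.symm
  have hxy : ∀ i, i < ℓ → x (a i) = y (b i) := by
    intro i hi
    obtain ⟨-, hi1, hv1⟩ := hax i hi
    obtain ⟨-, hi2, hv2⟩ := hby i hi
    rw [hv1, hv2]
  set K := ℓ + 1 - s with hK
  set Good : ℕ → Prop := fun t => ∀ r, r < s → a (t + r) = a t + r ∧ b (t + r) = b t + r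
    with hGoodDef
  set Gset := (Finset.range K).filter Good with hGset
  set G := Gset.card with hG
  -- counting
  have hcount : K ≤ G + 2 * ((s - 1) * (m - ℓ)) := by
    set stepsA := (Finset.range (ℓ - 1)).filter (fun t => a t + 1 < a (t + 1)) with hsA
    set stepsB := (Finset.range (ℓ - 1)).filter (fun t => b t + 1 < b (t + 1)) with hsB
    have hA : stepsA.card ≤ m - ℓ :=
      steps_count a.strictMono hℓm (fun i hi => (hax i hi).1)
    have hB : stepsB.card ≤ m - ℓ :=
      steps_count b.strictMono hℓm (fun i hi => (hby i hi).1)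
    have hbadsub : (Finset.range K).filter (fun t => ¬ Good t) ⊆
        (stepsA ∪ stepsB).biUnion (fun u => Finset.Icc (u + 2 - s) u) := by
      intro t ht
      obtain ⟨htK, hbad⟩ := Finset.mem_filter.1 ht
      rw [Finset.mem_range] at htK
      have htsℓ : t + s ≤ ℓ := by omega
      have hPex : ∃ r, r < s ∧ ¬(a (t + r) = a t + r ∧ b (t + r) = b t + r) := by
        by_contra hcon
        push_neg at hcon
        exact hbad (fun r hr => hcon r hr)
      obtain ⟨r₀, ⟨hr₀s, hr₀bad⟩, hr₀min⟩ :
          ∃ r₀, (r₀ < s ∧ ¬(a (t + r₀) = a t + r₀ ∧ b (t + r₀) = b t + r₀)) ∧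
            ∀ r, r < r₀ → ¬(r < s ∧ ¬(a (t + r) = a t + r ∧ b (t + r) = b t + r)) :=
        ⟨Nat.find hPex, Nat.find_spec hPex, fun r hr => Nat.find_min hPex hr⟩
      have hr₀pos : 1 ≤ r₀ := by
        rcases Nat.eq_zero_or_pos r₀ with h0 | h
        · exfalso
          apply hr₀bad
          rw [h0]
          simp
        · exact h
      have hprev : a (t + (r₀ - 1)) = a t + (r₀ - 1) ∧ b (t + (r₀ - 1)) = b t + (r₀ - 1) := by
        have hnp := hr₀min (r₀ - 1) (by omega)
        push_neg at hnp
        exact hnp (by omega)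
      have e1 : t + r₀ - 1 + 1 = t + r₀ := by omega
      have e2 : t + r₀ - 1 = t + (r₀ - 1) := by omega
      rcases not_and_or.1 hr₀bad with hfa | hfb
      · refine Finset.mem_biUnion.2 ⟨t + r₀ - 1, Finset.mem_union_left _ ?_, ?_⟩
        · refine Finset.mem_filter.2 ⟨Finset.mem_range.2 (by omega), ?_⟩
          rw [e1, e2]
          have hlt : a (t + (r₀ - 1)) < a (t + r₀) := a.strictMono (by omega)
          have h1 := hprev.1
          have hne : a (t + r₀) ≠ a t + r₀ := hfa
          omega
        · rw [Finset.mem_Icc]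
          omega
      · refine Finset.mem_biUnion.2 ⟨t + r₀ - 1, Finset.mem_union_right _ ?_, ?_⟩
        · refine Finset.mem_filter.2 ⟨Finset.mem_range.2 (by omega), ?_⟩
          rw [e1, e2]
          have hlt : b (t + (r₀ - 1)) < b (t + r₀) := b.strictMono (by omega)
          have h1 := hprev.2
          have hne : b (t + r₀) ≠ b t + r₀ := hfb
          omega
        · rw [Finset.mem_Icc]
          omega
    have hbadcard : ((Finset.range K).filter (fun t => ¬ Good t)).card
        ≤ (stepsA.card + stepsB.card) * (s - 1) :=
      calc ((Finset.range K).filter (fun t => ¬ Good t)).card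
          ≤ ((stepsA ∪ stepsB).biUnion (fun u => Finset.Icc (u + 2 - s) u)).card :=
            Finset.card_le_card hbadsub
        _ ≤ ∑ u ∈ stepsA ∪ stepsB, (Finset.Icc (u + 2 - s) u).card := Finset.card_biUnion_le
        _ ≤ ∑ _u ∈ stepsA ∪ stepsB, (s - 1) :=
            Finset.sum_le_sum (fun u _ => by rw [Nat.card_Icc]; omega)
        _ = (stepsA ∪ stepsB).card * (s - 1) := by rw [Finset.sum_const, smul_eq_mul]
        _ ≤ (stepsA.card + stepsB.card) * (s - 1) :=
            Nat.mul_le_mul_right _ (Finset.card_union_le _ _)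
    have hsplit : G + ((Finset.range K).filter (fun t => ¬ Good t)).card = K := by
      rw [hG, hGset]
      rw [Finset.card_filter_add_card_filter_not]
      · exact Finset.card_range K
    have hmul : (stepsA.card + stepsB.card) * (s - 1) ≤ 2 * ((s - 1) * (m - ℓ)) := by
      calc (stepsA.card + stepsB.card) * (s - 1) ≤ ((m - ℓ) + (m - ℓ)) * (s - 1) :=
            Nat.mul_le_mul_right _ (by omega)
        _ = 2 * ((s - 1) * (m - ℓ)) := by ring
    omega
  have hmG : m + 1 - G ≤ s + (2 * s - 1) * (m - ℓ) := by
    have hE : (2 * s - 1) * (m - ℓ) = 2 * ((s - 1) * (m - ℓ)) + (m - ℓ) := by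
      obtain ⟨s', rfl⟩ : ∃ s', s = s' + 1 := ⟨s - 1, by omega⟩
      rw [show 2 * (s' + 1) - 1 = 2 * s' + 1 by omega, show s' + 1 - 1 = s' by omega]
      ring
    omega
  -- window equality on good indices
  have hwin : ∀ t, t ∈ Gset → window x (a t) s = window y (b t) s := by
    intro t ht
    obtain ⟨htK, htG⟩ := Finset.mem_filter.1 ht
    rw [Finset.mem_range] at htK
    funext r
    have hrs : (r : ℕ) < s := r.isLt
    obtain ⟨har, hbr⟩ := htG r hrs
    show x (a t + r) = y (b t + r)
    rw [← har, ← hbr]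
    exact hxy (t + (r : ℕ)) (by omega)
  -- the common word
  set goodL := Gset.sort (· ≤ ·) with hgoodL
  set W := (goodL.map (fun t => f (window x (a t) s))).flatten with hW
  have hsorted : goodL.Pairwise (· < ·) := (Finset.sortedLT_sort Gset).pairwise
  have hmemG : ∀ t ∈ goodL, t ∈ Gset := fun t ht => (Finset.mem_sort _).1 ht
  have htlt : ∀ t ∈ Gset, t < ℓ := by
    intro t ht
    have htK := Finset.mem_range.1 (Finset.mem_filter.1 ht).1
    omega
  -- generic sublist fact
  have hsubgen : ∀ (z : ℕ → A) (c : ℕ ↪o ℕ) (lz : ℕ), (∀ t ∈ Gset, c t < m) → m ≤ lz →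
      cocycle f z lz ≤ L →
      ((goodL.map (fun t => f (window z (c t) s))).flatten) <+ factor (F z) 0 L := by
    intro z c lz hcm hmlz hzL
    have h1 : (goodL.map (fun t => (c t))).Pairwise (· < ·) :=
      List.Pairwise.map _ (fun _ _ hlt => c.strictMono hlt) hsorted
    have h2 : (goodL.map (fun t => (c t))) <+ List.range lz := by
      apply sorted_sublist_range h1
      intro j hj
      obtain ⟨t, ht, rfl⟩ := List.mem_map.1 hj
      exact lt_of_lt_of_le (hcm t (hmemG t ht)) hmlz
    have h3 := (h2.map (fun j => f (window z j s))).flatten_mono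
    rw [List.map_map] at h3
    rw [← factor_cocycle f hF z lz] at h3
    exact (by simpa [Function.comp_def] using h3 :
        ((goodL.map (fun t => f (window z (c t) s))).flatten) <+ factor (F z) 0 (cocycle f z lz)).trans
      (factor_prefix_sublist (F z) hzL)
  have hWy : W = (goodL.map (fun t => f (window y (b t) s))).flatten := by
    rw [hW]
    congr 1
    apply List.map_congr_left
    intro t ht
    rw [hwin t (hmemG t ht)]
  have hsubx : W <+ factor (F x) 0 L :=
    hsubgen x a lx (fun t ht => (hax t (htlt t ht)).1) (min_le_left _ _) hxL
  have hsuby : W <+ factor (F y) 0 L := by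
    rw [hWy]
    exact hsubgen y b ly (fun t ht => (hby t (htlt t ht)).1) (min_le_right _ _) hyL
  have hlcs : W.length ≤ lcs (factor (F x) 0 L) (factor (F y) 0 L) := le_lcs hsubx hsuby
  -- length of W via Finset sums
  have hlen_gen : ∀ (g : ℕ → List A),
      ((goodL.map g).flatten).length = ∑ t ∈ Gset, (g t).length := by
    intro g
    rw [List.length_flatten, List.map_map]
    have hperm : goodL.map (List.length ∘ g) ~ Gset.toList.map (List.length ∘ g) :=
      (Finset.sort_perm_toList (s := Gset) (r := (· ≤ ·))).map _
    rw [hperm.sum_eq]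
    exact Finset.sum_map_toList Gset (fun t => (g t).length)
  -- generic counting fact
  have hLWgen : ∀ (z : ℕ → A) (c : ℕ ↪o ℕ), (∀ t ∈ Gset, c t < m) →
      L ≤ cocycle f z (m + 1) →
      W.length = ∑ t ∈ Gset, (f (window z (c t) s)).length →
      L ≤ W.length + normMax f * (m + 1 - G) := by
    intro z c hcm hLc hWl
    have hinj : Set.InjOn (fun t => (c t)) Gset := fun u _ v _ h => c.injective h
    have himg : Gset.image (fun t => (c t)) ⊆ Finset.range (m + 1) := by
      intro j hj
      obtain ⟨t, ht, rfl⟩ := Finset.mem_image.1 hj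
      exact Finset.mem_range.2 (by have := hcm t ht; omega)
    have hsum1 : ∑ j ∈ Gset.image (fun t => (c t)), (f (window z j s)).length
        = ∑ t ∈ Gset, (f (window z (c t) s)).length :=
      Finset.sum_image (fun u hu v hv h => hinj hu hv h)
    have hcard : (Gset.image (fun t => (c t))).card = G := Finset.card_image_of_injOn hinj
    have hsd : ∑ j ∈ Finset.range (m + 1) \ Gset.image (fun t => (c t)),
          (f (window z j s)).length
        + ∑ j ∈ Gset.image (fun t => (c t)), (f (window z j s)).length
        = ∑ j ∈ Finset.range (m + 1), (f (window z j s)).length :=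
      Finset.sum_sdiff himg
    have hsdle : ∑ j ∈ Finset.range (m + 1) \ Gset.image (fun t => (c t)),
          (f (window z j s)).length ≤ (m + 1 - G) * normMax f := by
      calc ∑ j ∈ Finset.range (m + 1) \ Gset.image (fun t => (c t)), (f (window z j s)).length
          ≤ ∑ _j ∈ Finset.range (m + 1) \ Gset.image (fun t => (c t)), normMax f :=
            Finset.sum_le_sum (fun j _ => len_le_normMax f _)
        _ = (Finset.range (m + 1) \ Gset.image (fun t => (c t))).card * normMax f := by
            rw [Finset.sum_const, smul_eq_mul]
        _ = (m + 1 - G) * normMax f := by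
            rw [Finset.card_sdiff_of_subset himg, Finset.card_range, hcard]
    have hcoc : cocycle f z (m + 1) = ∑ j ∈ Finset.range (m + 1), (f (window z j s)).length := rfl
    rw [hWl, ← hsum1]
    have := hLc
    rw [hcoc, ← hsd] at this
    calc L ≤ ∑ j ∈ Finset.range (m + 1) \ Gset.image (fun t => (c t)), (f (window z j s)).length
          + ∑ j ∈ Gset.image (fun t => (c t)), (f (window z j s)).length := this
      _ ≤ (m + 1 - G) * normMax f
          + ∑ j ∈ Gset.image (fun t => (c t)), (f (window z j s)).length := by
            exact Nat.add_le_add_right hsdle _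
      _ = ∑ j ∈ Gset.image (fun t => (c t)), (f (window z j s)).length
          + normMax f * (m + 1 - G) := by ring
  -- case split on which of lx, ly is the min
  have hLW : L ≤ W.length + normMax f * (m + 1 - G) := by
    rcases min_cases lx ly with ⟨hmin, hle⟩ | ⟨hmin, hlt⟩
    · refine hLWgen x a (fun t ht => (hax t (htlt t ht)).1) ?_ (hlen_gen _)
      rw [show m + 1 = lx + 1 by omega]
      exact hLx
    · refine hLWgen y b (fun t ht => (hby t (htlt t ht)).1) ?_ ?_
      · rw [show m + 1 = ly + 1 by omega]
        exact hLy
      · rw [hWy]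
        exact hlen_gen _
  calc L ≤ W.length + normMax f * (m + 1 - G) := hLW
    _ ≤ lcs (factor (F x) 0 L) (factor (F y) 0 L)
        + normMax f * (s + (2 * s - 1) * (m - ℓ)) := by
        have h1 := Nat.mul_le_mul_left (normMax f) hmG
        omega
end key

section main
open Filter Topology
variable {A : Type*} [Fintype A] [Nonempty A] {s : ℕ}

lemma real_le_of_forall_pos_le_add {a b : ℝ} (h : ∀ ε : ℝ, 0 < ε → a ≤ b + ε) : a ≤ b := by
  by_contra hc
  push_neg at hc
  have := h ((a - b) / 2) (by linarith)
  linarith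

lemma levD_div_nonneg {B : Type*} (x y : ℕ → B) (n : ℕ) :
    0 ≤ levD (factor x 0 n) (factor y 0 n) / n := by
  apply div_nonneg _ (Nat.cast_nonneg n)
  rw [levD, factor_length, factor_length]
  have h1 : lcs (factor x 0 n) (factor y 0 n) ≤ n := by
    simpa using lcs_le_left (factor x 0 n) (factor y 0 n)
  have : (lcs (factor x 0 n) (factor y 0 n) : ℝ) ≤ n := by exact_mod_cast h1
  linarith

lemma levD_div_le_one {B : Type*} (x y : ℕ → B) (n : ℕ) :
    levD (factor x 0 n) (factor y 0 n) / n ≤ 1 := by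
  rcases Nat.eq_zero_or_pos n with h0 | hpos
  · subst h0
    simp
  have hn : (0 : ℝ) < n := by exact_mod_cast hpos
  rw [div_le_one hn, levD, factor_length, factor_length]
  have : (0 : ℝ) ≤ lcs (factor x 0 n) (factor y 0 n) := Nat.cast_nonneg _
  linarith

lemma main_lipschitz (hs : 1 ≤ s) (f : (Fin s → A) → List A) (hf : ∀ u, f u ≠ [])
    (F : (ℕ → A) → ℕ → A) (hF : IsDillVia f F) (x y : ℕ → A) :
    feld (F x) (F y) ≤ (2 * (s : ℝ) - 1) * ((normMax f : ℝ) / (normMin f : ℝ)) * feld x y := by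
  classical
  have hmin1 : 1 ≤ normMin f := one_le_normMin f hf
  have hmax1 : 1 ≤ normMax f := hmin1.trans (normMin_le_normMax f)
  have hminR : (0 : ℝ) < normMin f := by exact_mod_cast hmin1
  have hmaxR : (0 : ℝ) < normMax f := by exact_mod_cast hmax1
  -- the window-count functions
  set lx : ℕ → ℕ := fun L => Nat.findGreatest (fun n => cocycle f x n ≤ L) L with hlx
  set ly : ℕ → ℕ := fun L => Nat.findGreatest (fun n => cocycle f y n ≤ L) L with hly
  set mm : ℕ → ℕ := fun L => min (lx L) (ly L) with hmm
  have hcoc0x : ∀ L, cocycle f x (lx L) ≤ L := by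
    intro L
    exact Nat.findGreatest_spec (P := fun n => cocycle f x n ≤ L) (Nat.zero_le L)
      (by simp [cocycle])
  have hcoc0y : ∀ L, cocycle f y (ly L) ≤ L := by
    intro L
    exact Nat.findGreatest_spec (P := fun n => cocycle f y n ≤ L) (Nat.zero_le L)
      (by simp [cocycle])
  have hcoc1x : ∀ L, L ≤ cocycle f x (lx L + 1) := by
    intro L
    rcases le_or_gt (lx L + 1) L with h | h
    · have e : lx L = Nat.findGreatest (fun n => cocycle f x n ≤ L) L := rfl
      have hng := Nat.findGreatest_is_greatest (P := fun n => cocycle f x n ≤ L) (n := L)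
        (k := lx L + 1) (by rw [← e]; omega) h
      omega
    · have h2 := min_mul_le_cocycle f x (lx L + 1)
      have : lx L + 1 ≤ normMin f * (lx L + 1) := Nat.le_mul_of_pos_left _ (by omega)
      omega
  have hcoc1y : ∀ L, L ≤ cocycle f y (ly L + 1) := by
    intro L
    rcases le_or_gt (ly L + 1) L with h | h
    · have e : ly L = Nat.findGreatest (fun n => cocycle f y n ≤ L) L := rfl
      have hng := Nat.findGreatest_is_greatest (P := fun n => cocycle f y n ≤ L) (n := L)
        (k := ly L + 1) (by rw [← e]; omega) h
      omega
    · have h2 := min_mul_le_cocycle f y (ly L + 1)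
      have : ly L + 1 ≤ normMin f * (ly L + 1) := Nat.le_mul_of_pos_left _ (by omega)
      omega
  have hLup : ∀ L, L ≤ normMax f * (mm L + 1) := by
    intro L
    rcases min_cases (lx L) (ly L) with ⟨hmin, _⟩ | ⟨hmin, _⟩
    · have := (hcoc1x L).trans (cocycle_le_max_mul f x (lx L + 1))
      rw [hmm]
      simp only [hmin]
      omega
    · have := (hcoc1y L).trans (cocycle_le_max_mul f y (ly L + 1))
      rw [hmm]
      simp only [hmin]
      omega
  have hLlow : ∀ L, normMin f * mm L ≤ L := by
    intro L
    have h0 := hcoc0x L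
    have h1 := min_mul_le_cocycle f x (lx L)
    have h2 : normMin f * mm L ≤ normMin f * lx L :=
      Nat.mul_le_mul_left _ (min_le_left _ _)
    omega
  have hmmT : Tendsto mm atTop atTop := by
    rw [tendsto_atTop]
    intro C
    filter_upwards [eventually_ge_atTop (normMax f * (C + 1) + 1)] with L hL
    have h1 := hLup L
    by_contra hcon
    push_neg at hcon
    have : normMax f * (mm L + 1) ≤ normMax f * C := Nat.mul_le_mul_left _ (by omega)
    have h3 : normMax f * C ≤ normMax f * (C + 1) := Nat.mul_le_mul_left _ (by omega)
    omega
  -- real constants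
  set C : ℝ := (2 * (s : ℝ) - 1) * ((normMax f : ℝ) / (normMin f : ℝ)) with hC
  have hCpos : 0 < C := by
    apply mul_pos
    · have : (1 : ℝ) ≤ (s : ℝ) := by exact_mod_cast hs
      linarith
    · positivity
  set g : ℕ → ℝ := fun n => levD (factor x 0 n) (factor y 0 n) / n with hg
  set h : ℕ → ℝ := fun L => levD (factor (F x) 0 L) (factor (F y) 0 L) / L with hh
  -- the per-L bound
  have perL : ∀ L : ℕ, 1 ≤ mm L →
      h L ≤ C * g (mm L) + ((normMax f : ℝ) * s / normMin f) / mm L := by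
    intro L hmL
    have hkey := key_lemma hs f F hF x y (hcoc0x L) (hcoc0y L) (hcoc1x L) (hcoc1y L)
    set M := mm L with hM
    have hMmin : M = min (lx L) (ly L) := rfl
    rw [← hMmin] at hkey
    set ℓ := lcs (factor x 0 M) (factor y 0 M) with hℓ
    set lcsIm := lcs (factor (F x) 0 L) (factor (F y) 0 L) with hlcsIm
    have hℓM : ℓ ≤ M := by simpa using lcs_le_left (factor x 0 M) (factor y 0 M)
    have hlcsImL : lcsIm ≤ L := by simpa using lcs_le_left (factor (F x) 0 L) (factor (F y) 0 L)
    have hLpos : 1 ≤ L := by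
      have h0 := hLlow L
      rw [← hM] at h0
      have h11 : 1 * 1 ≤ normMin f * M := Nat.mul_le_mul hmin1 hmL
      omega
    -- cast everything to ℝ
    have hkeyR : (L : ℝ) - lcsIm ≤ (normMax f : ℝ) * (s + (2 * (s : ℝ) - 1) * ((M : ℝ) - ℓ)) := by
      have hcast : ((2 * s - 1 : ℕ) : ℝ) = 2 * (s : ℝ) - 1 := by
        have : 1 ≤ 2 * s := by omega
        push_cast [Nat.cast_sub this]
        ring
      have hcast2 : ((M - ℓ : ℕ) : ℝ) = (M : ℝ) - ℓ := by
        push_cast [Nat.cast_sub hℓM]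
        ring
      have := hkey
      have hR : (L : ℝ) ≤ lcsIm + (normMax f : ℝ) * (s + (2 * s - 1 : ℕ) * ((M - ℓ : ℕ) : ℝ)) := by
        exact_mod_cast this
      rw [hcast, hcast2] at hR
      linarith
    have hLR : (0 : ℝ) < L := by exact_mod_cast hLpos
    have hMR : (0 : ℝ) < M := by exact_mod_cast hmL
    have hminM : (normMin f : ℝ) * M ≤ L := by
      have h0 := hLlow L
      rw [← hM] at h0
      exact_mod_cast h0
    have hhL : h L = ((L : ℝ) - lcsIm) / L := by
      rw [hh]
      simp only []
      rw [levD, factor_length, factor_length, ← hlcsIm]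
      congr 1
      ring
    have hgM : g M = ((M : ℝ) - ℓ) / M := by
      rw [hg]
      simp only []
      rw [levD, factor_length, factor_length, ← hℓ]
      congr 1
      ring
    rw [hhL, hgM]
    have hnum0 : (0 : ℝ) ≤ (normMax f : ℝ) * (s + (2 * (s : ℝ) - 1) * ((M : ℝ) - ℓ)) := by
      apply mul_nonneg hmaxR.le
      have h1 : (1 : ℝ) ≤ (s : ℝ) := by exact_mod_cast hs
      have h2 : (0 : ℝ) ≤ (M : ℝ) - ℓ := by
        have : (ℓ : ℝ) ≤ M := by exact_mod_cast hℓM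
        linarith
      nlinarith
    calc ((L : ℝ) - lcsIm) / L
        ≤ ((normMax f : ℝ) * (s + (2 * (s : ℝ) - 1) * ((M : ℝ) - ℓ))) / L := by
          exact div_le_div_of_nonneg_right hkeyR hLR.le
      _ ≤ ((normMax f : ℝ) * (s + (2 * (s : ℝ) - 1) * ((M : ℝ) - ℓ))) / ((normMin f : ℝ) * M) := by
          apply div_le_div_of_nonneg_left hnum0 (by positivity) hminM
      _ = C * (((M : ℝ) - ℓ) / M) + ((normMax f : ℝ) * s / normMin f) / M := by
          rw [hC]
          field_simp
          ring
  -- limsup arguments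
  have hgle1 : ∀ n, g n ≤ 1 := fun n => levD_div_le_one x y n
  have hgge0 : ∀ n, 0 ≤ g n := fun n => levD_div_nonneg x y n
  have hhge0 : ∀ n, 0 ≤ h n := fun n => levD_div_nonneg (F x) (F y) n
  have hfeld : feld (F x) (F y) = limsup h atTop := rfl
  have hfeldxy : feld x y = limsup g atTop := rfl
  rw [hfeld, hfeldxy]
  apply real_le_of_forall_pos_le_add
  intro ε hε
  set D := limsup g atTop with hD
  set δ := ε / (2 * C) with hδ
  have hδpos : 0 < δ := by positivity
  have hbddg : IsBoundedUnder (· ≤ ·) atTop g := isBoundedUnder_of ⟨1, hgle1⟩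
  have hev1 : ∀ᶠ n in atTop, g n < D + δ :=
    eventually_lt_of_limsup_lt (by linarith [hD]) hbddg
  have hev1' : ∀ᶠ L in atTop, g (mm L) < D + δ := hmmT.eventually hev1
  have hev2 : ∀ᶠ L in atTop, ((normMax f : ℝ) * s / normMin f) / mm L < ε / 2 := by
    have ht : Tendsto (fun L => ((normMax f : ℝ) * s / normMin f) / mm L) atTop (𝓝 0) :=
      (tendsto_const_div_atTop_nhds_zero_nat _).comp hmmT
    exact ht.eventually_lt_const (by linarith)
  have hev3 : ∀ᶠ L in atTop, 1 ≤ mm L := hmmT.eventually (eventually_ge_atTop 1)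
  have hevall : ∀ᶠ L in atTop, h L ≤ C * (D + δ) + ε / 2 := by
    filter_upwards [hev1', hev2, hev3] with L h1 h2 h3
    calc h L ≤ C * g (mm L) + ((normMax f : ℝ) * s / normMin f) / mm L := perL L h3
      _ ≤ C * (D + δ) + ε / 2 := by
          have := mul_le_mul_of_nonneg_left h1.le hCpos.le
          linarith
  have hcobdd : IsCoboundedUnder (· ≤ ·) atTop h :=
    isCoboundedUnder_le_of_le atTop (x := 0) (fun n => hhge0 n)
  have hlim : limsup h atTop ≤ C * (D + δ) + ε / 2 := limsup_le_of_le hcobdd hevall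
  have hCδ : C * δ = ε / 2 := by
    rw [hδ]
    field_simp
  calc limsup h atTop ≤ C * (D + δ) + ε / 2 := hlim
    _ = C * D + ε := by rw [mul_add, hCδ]; ring
end main

section castsup

lemma csSup_image_natCast {S : Set ℕ} (hne : S.Nonempty) (hbdd : BddAbove S) :
    sSup ((fun n : ℕ => (n : ℝ)) '' S) = ((sSup S : ℕ) : ℝ) := by
  apply _root_.le_antisymm
  · apply csSup_le (hne.image _)
    rintro r ⟨n, hn, rfl⟩
    show (n : ℝ) ≤ _
    exact_mod_cast le_csSup hbdd hn
  · apply le_csSup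
    · refine ⟨((sSup S : ℕ) : ℝ), ?_⟩
      rintro r ⟨n, hn, rfl⟩
      show (n : ℝ) ≤ _
      exact_mod_cast le_csSup hbdd hn
    · exact Set.mem_image_of_mem _ (Nat.sSup_mem hne hbdd)

lemma csInf_image_natCast {S : Set ℕ} (hne : S.Nonempty) :
    sInf ((fun n : ℕ => (n : ℝ)) '' S) = ((sInf S : ℕ) : ℝ) := by
  apply _root_.le_antisymm
  · apply csInf_le
    · refine ⟨0, ?_⟩
      rintro r ⟨n, hn, rfl⟩
      exact Nat.cast_nonneg n
    · exact Set.mem_image_of_mem _ (Nat.sInf_mem hne)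
  · apply le_csInf (hne.image _)
    rintro r ⟨n, hn, rfl⟩
    show _ ≤ (n : ℝ)
    exact_mod_cast Nat.sInf_le hn

end castsup

/-- Every dill map with diameter `s` and local rule `f` is
`(2s-1)·(‖f‖_max/‖f‖_min)`-Lipschitz for the Feldman pseudometric; in particular every
substitution `τ` (via its induced map `G = τ̄`) is `(‖τ‖_max/‖τ‖_min)`-Lipschitz. -/
theorem dill_feld_lipschitz {A : Type*} [Fintype A] [Nonempty A] (s : ℕ) (hs : 1 ≤ s)
    (f : (Fin s → A) → List A) (hf : ∀ u, f u ≠ [])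
    (F : (ℕ → A) → ℕ → A) (hF : IsDillVia f F) :
    (∀ x y : ℕ → A,
      feld (F x) (F y) ≤ (2 * (s : ℝ) - 1) * ((normMax f : ℝ) / (normMin f : ℝ)) * feld x y) ∧
    (∀ (τ : A → List A), (∀ a, τ a ≠ []) →
      ∀ G : (ℕ → A) → ℕ → A,
        (∀ (z : ℕ → A) (n k : ℕ) (h : k < (τ (z n)).length),
          G z (subCocycle τ z n + k) = (τ (z n)).get ⟨k, h⟩) →
        ∀ x y : ℕ → A,
          feld (G x) (G y) ≤
            ((sSup {n | ∃ a : A, (τ a).length = n} : ℝ) /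
              (sInf {n | ∃ a : A, (τ a).length = n} : ℝ)) * feld x y) := by
  constructor
  · exact fun x y => main_lipschitz hs f hf F hF x y
  · intro τ hτ G hG x y
    set f' : (Fin 1 → A) → List A := fun u => τ (u 0) with hf'def
    have hf' : ∀ u, f' u ≠ [] := fun u => hτ (u 0)
    have hfw : ∀ (z : ℕ → A) (n : ℕ), f' (window z n 1) = τ (z n) := fun z n => rfl
    have hcoc : ∀ (z : ℕ → A) (n : ℕ), cocycle f' z n = subCocycle τ z n := by
      intro z n
      exact Finset.sum_congr rfl (fun j _ => by rw [hfw])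
    have hdill : IsDillVia f' G := by
      intro z n k hk
      have hk' : k < (τ (z n)).length := by rwa [hfw z n] at hk
      have hGz := hG z n k hk'
      rw [hcoc z n, hGz]
      rfl
    have hsetN : {n | ∃ u : Fin 1 → A, (f' u).length = n} = {n | ∃ a : A, (τ a).length = n} := by
      ext n
      constructor
      · rintro ⟨u, hu⟩
        exact ⟨u 0, hu⟩
      · rintro ⟨a0, ha0⟩
        exact ⟨fun _ => a0, ha0⟩
    -- identify the real-valued sSup/sInf in the target with casts of the ℕ-valued ones
    have hsetR : {r : ℝ | ∃ a : A, ((τ a).length : ℝ) = r}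
        = (fun n : ℕ => (n : ℝ)) '' {n | ∃ a : A, (τ a).length = n} := by
      ext r
      constructor
      · rintro ⟨a0, ha0⟩
        exact ⟨(τ a0).length, ⟨a0, rfl⟩, ha0⟩
      · rintro ⟨n, ⟨a0, ha0⟩, rfl⟩
        exact ⟨a0, by rw [ha0]⟩
    have hneN : {n | ∃ a : A, (τ a).length = n}.Nonempty :=
      ⟨(τ Classical.ofNonempty).length, Classical.ofNonempty, rfl⟩
    have hbddN : BddAbove {n | ∃ a : A, (τ a).length = n} := by
      have : {n | ∃ a : A, (τ a).length = n} = Set.range (fun a : A => (τ a).length) := rfl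
      rw [this]
      exact (Set.finite_range _).bddAbove
    have hSup : (sSup {n : ℝ | ∃ a : A, ((τ a).length : ℝ) = n} : ℝ)
        = ((sSup {n : ℕ | ∃ a : A, (τ a).length = n} : ℕ) : ℝ) := by
      rw [hsetR]
      exact csSup_image_natCast hneN hbddN
    have hInf : (sInf {n : ℝ | ∃ a : A, ((τ a).length : ℝ) = n} : ℝ)
        = ((sInf {n : ℕ | ∃ a : A, (τ a).length = n} : ℕ) : ℝ) := by
      rw [hsetR]
      exact csInf_image_natCast hneN
    have hm := main_lipschitz (le_refl 1) f' hf' G hdill x y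
    have h1 : normMax f' = sSup {n : ℕ | ∃ a : A, (τ a).length = n} := by
      rw [normMax, hsetN]
    have h2 : normMin f' = sInf {n : ℕ | ∃ a : A, (τ a).length = n} := by
      rw [normMin, hsetN]
    rw [h1, h2] at hm
    calc feld (G x) (G y)
        ≤ (2 * ((1 : ℕ) : ℝ) - 1) * (((sSup {n : ℕ | ∃ a : A, (τ a).length = n} : ℕ) : ℝ) /
            ((sInf {n : ℕ | ∃ a : A, (τ a).length = n} : ℕ) : ℝ)) * feld x y := hm
      _ = ((sSup {n | ∃ a : A, (τ a).length = n} : ℝ) /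
            (sInf {n | ∃ a : A, (τ a).length = n} : ℝ)) * feld x y := by
          rw [hSup, hInf]
          norm_num
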